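/- For every n ≥ 1, every convex continuous function f : [0,1] → ℝ, and all x, y ∈ [0,1], the inequality ∑_{i=0}^{n} ∑_{j=0}^{n} (b_{n,i}(x)·b_{n,j}(x) + b_{n,i}(y)·b_{n,j}(y) − 2·b_{n,i}(x)·b_{n,j}(y)) · f((i+j)/(2n)) ≥ 0 holds. -/

import Mathlib

open Finset

/-- Bernstein fundamental polynomial `b_{n,i}(x)`. -/
def bern (n i : ℕ) (x : ℝ) : ℝ := (n.choose i : ℝ) * x ^ i * (1 - x) ^ (n - i)

lemma bern_nonneg {n i : ℕ} {t : ℝ} (h0 : 0 ≤ t) (h1 : t ≤ 1) : 0 ≤ bern n i t := by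
  unfold bern
  have h : (0:ℝ) ≤ 1 - t := by linarith
  positivity

lemma bern_continuous (n i : ℕ) : Continuous (bern n i) := by
  unfold bern; fun_prop

lemma bern_sum (n : ℕ) (t : ℝ) : ∑ i ∈ range (n+1), bern n i t = 1 := by
  calc ∑ i ∈ range (n+1), bern n i t
      = ∑ i ∈ range (n+1), t^i * (1-t)^(n-i) * (n.choose i : ℝ) := by
        exact sum_congr rfl fun i _ => by unfold bern; ring
    _ = (t + (1-t))^n := (add_pow t (1-t) n).symm
    _ = 1 := by norm_num

lemma bern_hasDerivAt_zero (m : ℕ) (t : ℝ) :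
    HasDerivAt (fun s => bern (m+1) 0 s) (-((m:ℝ)+1) * bern m 0 t) t := by
  have hs : HasDerivAt (fun s : ℝ => 1 - s) (-1) t := by
    simpa using (hasDerivAt_id t).const_sub 1
  have h : HasDerivAt (fun s : ℝ => (1-s)^(m+1)) _ t := hs.pow (m+1)
  have e : (fun s => bern (m+1) 0 s) = (fun s : ℝ => (1-s)^(m+1)) := by
    funext s; unfold bern; simp
  rw [e]
  convert h using 1
  unfold bern; push_cast; simp; ring

lemma bern_hasDerivAt_succ (m i : ℕ) (t : ℝ) :
    HasDerivAt (fun s => bern (m+1) (i+1) s)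
      (((m:ℝ)+1) * (bern m i t - bern m (i+1) t)) t := by
  have h1 : HasDerivAt (fun s : ℝ => s^(i+1)) (((i:ℝ)+1) * t^i) t := by
    simpa using hasDerivAt_pow (i+1) t
  have hs : HasDerivAt (fun s : ℝ => 1 - s) (-1) t := by
    simpa using (hasDerivAt_id t).const_sub 1
  have h2 : HasDerivAt (fun s : ℝ => (1-s)^(m-i)) (((m-i:ℕ):ℝ) * (1-t)^(m-i-1) * (-1)) t :=
    hs.pow (m-i)
  have h3 : HasDerivAt (fun s : ℝ => ((m+1).choose (i+1) : ℝ) * (s^(i+1) * (1-s)^(m-i))) _ t :=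
    (h1.mul h2).const_mul (((m+1).choose (i+1) : ℝ))
  have e : (fun s => bern (m+1) (i+1) s)
      = fun s : ℝ => ((m+1).choose (i+1) : ℝ) * (s^(i+1) * (1-s)^(m-i)) := by
    funext s; unfold bern; rw [Nat.succ_sub_succ]; ring
  rw [e]
  convert h3 using 1
  have c1 : ((m+1).choose (i+1) : ℝ) * ((i:ℝ)+1) = ((m:ℝ)+1) * (m.choose i : ℝ) := by
    have h := Nat.add_one_mul_choose_eq m i
    have hr : ((m:ℝ)+1) * (m.choose i : ℝ) = ((m+1).choose (i+1) : ℝ) * ((i:ℝ)+1) := by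
      exact_mod_cast congrArg (Nat.cast : ℕ → ℝ) h
    linear_combination -hr
  have c2 : ((m+1).choose (i+1) : ℝ) * ((m-i:ℕ):ℝ) = ((m:ℝ)+1) * (m.choose (i+1) : ℝ) := by
    have h : m.choose (i+1) * (m+1) = (m+1).choose (i+1) * (m - i) := by
      rw [Nat.choose_mul_succ_eq m (i+1)]; congr 1; omega
    have hr : (m.choose (i+1) : ℝ) * ((m:ℝ)+1) = ((m+1).choose (i+1):ℝ) * ((m-i:ℕ):ℝ) := by
      exact_mod_cast congrArg (Nat.cast : ℕ → ℝ) h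
    linear_combination -hr
  unfold bern
  have e2 : m - (i+1) = m - i - 1 := by omega
  rw [e2]
  linear_combination (-(t^i*(1-t)^(m-i))) * c1 + (t^(i+1)*(1-t)^(m-i-1)) * c2

lemma partial_hasDerivAt (m k : ℕ) (t : ℝ) :
    HasDerivAt (fun s => ∑ i ∈ range (k+1), bern (m+1) i s)
      (-((m:ℝ)+1) * bern m k t) t := by
  induction k with
  | zero => simpa using bern_hasDerivAt_zero m t
  | succ k ih =>
    have h : HasDerivAt (fun s => (∑ i ∈ range (k+1), bern (m+1) i s) + bern (m+1) (k+1) s) _ t :=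
      ih.add (bern_hasDerivAt_succ m k t)
    have e : (fun s => ∑ i ∈ range (k+1+1), bern (m+1) i s)
        = fun s => (∑ i ∈ range (k+1), bern (m+1) i s) + bern (m+1) (k+1) s := by
      funext s; rw [sum_range_succ]
    rw [e]
    convert h using 1; ring

lemma partial_eq_integral (m k : ℕ) (y x : ℝ) :
    (∑ i ∈ range (k+1), bern (m+1) i x) - (∑ i ∈ range (k+1), bern (m+1) i y)
      = -((m:ℝ)+1) * ∫ t in y..x, bern m k t := by
  rw [← intervalIntegral.integral_const_mul]
  exact (intervalIntegral.integral_eq_sub_of_hasDerivAt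
    (fun t _ => partial_hasDerivAt m k t)
    ((continuous_const.mul (bern_continuous m k)).intervalIntegrable y x)).symm

lemma sum_parts (a c : ℕ → ℝ) (n : ℕ) :
    ∑ i ∈ range (n+1), a i * c i
      = (∑ i ∈ range (n+1), a i) * c n
        - ∑ k ∈ range n, (∑ i ∈ range (k+1), a i) * (c (k+1) - c k) := by
  induction n with
  | zero => simp
  | succ n ih =>
    rw [sum_range_succ (fun i => a i * c i), ih]
    simp only [sum_range_succ]
    ring

lemma double_parts (a c : ℕ → ℝ) (n : ℕ) (ha : ∑ i ∈ range (n+1), a i = 0) :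
    ∑ i ∈ range (n+1), ∑ j ∈ range (n+1), a i * a j * c (i+j)
      = ∑ k ∈ range n, ∑ l ∈ range n,
          (∑ p ∈ range (k+1), a p) * (∑ p ∈ range (l+1), a p)
            * (c (k+l+2) - 2*c (k+l+1) + c (k+l)) := by
  have step : ∀ g : ℕ → ℝ, ∑ i ∈ range (n+1), a i * g i
      = -∑ k ∈ range n, (∑ p ∈ range (k+1), a p) * (g (k+1) - g k) := by
    intro g; rw [sum_parts a g n, ha]; ring
  have step' : ∀ r : ℕ, ∑ i ∈ range (n+1), a i * c (r+i)
      = -∑ l ∈ range n, (∑ p ∈ range (l+1), a p) * (c (r+l+1) - c (r+l)) :=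
    fun r => step (fun j => c (r+j))
  calc ∑ i ∈ range (n+1), ∑ j ∈ range (n+1), a i * a j * c (i+j)
      = ∑ i ∈ range (n+1), ∑ k ∈ range n,
          -(a i * ((∑ p ∈ range (k+1), a p) * (c (i+k+1) - c (i+k)))) := by
        refine sum_congr rfl fun i _ => ?_
        calc ∑ j ∈ range (n+1), a i * a j * c (i+j)
            = a i * ∑ j ∈ range (n+1), a j * c (i+j) := by
              rw [mul_sum]; exact sum_congr rfl fun j _ => by ring
          _ = a i * -∑ k ∈ range n, (∑ p ∈ range (k+1), a p) * (c (i+k+1) - c (i+k)) := by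
              rw [step' i]
          _ = ∑ k ∈ range n, -(a i * ((∑ p ∈ range (k+1), a p) * (c (i+k+1) - c (i+k)))) := by
              rw [mul_neg, mul_sum, ← sum_neg_distrib]
    _ = ∑ k ∈ range n, -((∑ p ∈ range (k+1), a p)
          * ∑ i ∈ range (n+1), a i * (c (i+k+1) - c (i+k))) := by
        rw [sum_comm]
        refine sum_congr rfl fun k _ => ?_
        rw [mul_sum, ← sum_neg_distrib]
        exact sum_congr rfl fun i _ => by ring
    _ = ∑ k ∈ range n, ∑ l ∈ range n,
          (∑ p ∈ range (k+1), a p) * (∑ p ∈ range (l+1), a p)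
            * (c (k+l+2) - 2*c (k+l+1) + c (k+l)) := by
        refine sum_congr rfl fun k _ => ?_
        have e1 : ∑ i ∈ range (n+1), a i * (c (i+k+1) - c (i+k))
            = (∑ i ∈ range (n+1), a i * c ((k+1)+i)) - ∑ i ∈ range (n+1), a i * c (k+i) := by
          rw [← sum_sub_distrib]
          refine sum_congr rfl fun i _ => ?_
          rw [show i+k+1 = (k+1)+i by omega, show i+k = k+i by omega]
          ring
        rw [e1, step' (k+1), step' k]
        have hr : ∑ l ∈ range n, (∑ p ∈ range (k+1), a p) * (∑ p ∈ range (l+1), a p)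
              * (c (k+l+2) - 2*c (k+l+1) + c (k+l))
            = (∑ p ∈ range (k+1), a p) *
              ((∑ l ∈ range n, (∑ p ∈ range (l+1), a p) * (c ((k+1)+l+1) - c ((k+1)+l)))
                - ∑ l ∈ range n, (∑ p ∈ range (l+1), a p) * (c (k+l+1) - c (k+l))) := by
          rw [← sum_sub_distrib, mul_sum]
          refine sum_congr rfl fun l _ => ?_
          rw [show (k+1)+l+1 = k+l+2 by omega, show (k+1)+l = k+l+1 by omega]
          ring
        rw [hr]
        ring

lemma second_diff_nonneg (f : ℝ → ℝ) (hconv : ConvexOn ℝ (Set.Icc 0 1) f)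
    {p q : ℝ} (hp : p ∈ Set.Icc (0:ℝ) 1) (hq : q ∈ Set.Icc (0:ℝ) 1) :
    0 ≤ f q - 2 * f ((p+q)/2) + f p := by
  have h := hconv.2 hp hq (by norm_num : (0:ℝ) ≤ 1/2) (by norm_num : (0:ℝ) ≤ 1/2)
    (by norm_num : (1/2 : ℝ) + 1/2 = 1)
  simp only [smul_eq_mul] at h
  have e : (1/2 : ℝ) * p + (1/2) * q = (p+q)/2 := by ring
  rw [e] at h
  linarith

/-- The difference of Bernstein coefficient vectors. -/
def aa (m : ℕ) (x y : ℝ) (i : ℕ) : ℝ := bern (m+1) i x - bern (m+1) i y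

/-- `f` sampled at the grid points. -/
noncomputable def cc (f : ℝ → ℝ) (m p : ℕ) : ℝ := f ((p:ℝ) / (2*((m:ℝ)+1)))


/-- Raşa's inequality. -/
theorem rasa_inequality (n : ℕ) (hn : 1 ≤ n) (f : ℝ → ℝ)
    (hconv : ConvexOn ℝ (Set.Icc 0 1) f) (hcont : ContinuousOn f (Set.Icc 0 1))
    (x y : ℝ) (hx : x ∈ Set.Icc (0:ℝ) 1) (hy : y ∈ Set.Icc (0:ℝ) 1) :
    0 ≤ ∑ i ∈ range (n + 1), ∑ j ∈ range (n + 1),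
      (bern n i x * bern n j x + bern n i y * bern n j y
        - 2 * bern n i x * bern n j y) * f ((i + j : ℝ) / (2 * n)) := by
  obtain ⟨m, rfl⟩ : ∃ m, n = m + 1 := ⟨n - 1, by omega⟩
  -- rewrite `f` values via `cc`
  have hF : ∀ i j : ℕ, f ((i + j : ℝ) / (2 * ((m:ℕ)+1 : ℕ))) = cc f m (i+j) := by
    intro i j; unfold cc; congr 1; push_cast; ring
  -- zero-sum property
  have ha : ∑ i ∈ range (m+1+1), aa m x y i = 0 := by
    unfold aa; rw [sum_sub_distrib, bern_sum, bern_sum, sub_self]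
  -- step 1: goal sum equals the quadratic-form sum
  have key : ∑ i ∈ range (m+1+1), ∑ j ∈ range (m+1+1),
        (bern (m+1) i x * bern (m+1) j x + bern (m+1) i y * bern (m+1) j y
          - 2 * bern (m+1) i x * bern (m+1) j y) * cc f m (i+j)
      = ∑ i ∈ range (m+1+1), ∑ j ∈ range (m+1+1),
          aa m x y i * aa m x y j * cc f m (i+j) := by
    have swap : ∑ i ∈ range (m+1+1), ∑ j ∈ range (m+1+1),
          bern (m+1) i y * bern (m+1) j x * cc f m (i+j)
        = ∑ i ∈ range (m+1+1), ∑ j ∈ range (m+1+1),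
            bern (m+1) i x * bern (m+1) j y * cc f m (i+j) := by
      rw [sum_comm]
      refine sum_congr rfl fun i _ => sum_congr rfl fun j _ => ?_
      rw [show j + i = i + j by omega]
      ring
    calc ∑ i ∈ range (m+1+1), ∑ j ∈ range (m+1+1),
          (bern (m+1) i x * bern (m+1) j x + bern (m+1) i y * bern (m+1) j y
            - 2 * bern (m+1) i x * bern (m+1) j y) * cc f m (i+j)
        = (∑ i ∈ range (m+1+1), ∑ j ∈ range (m+1+1),
            aa m x y i * aa m x y j * cc f m (i+j))
          + ((∑ i ∈ range (m+1+1), ∑ j ∈ range (m+1+1),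
              bern (m+1) i y * bern (m+1) j x * cc f m (i+j))
            - ∑ i ∈ range (m+1+1), ∑ j ∈ range (m+1+1),
              bern (m+1) i x * bern (m+1) j y * cc f m (i+j)) := by
          rw [← sum_sub_distrib, ← sum_add_distrib]
          refine sum_congr rfl fun i _ => ?_
          rw [← sum_sub_distrib, ← sum_add_distrib]
          refine sum_congr rfl fun j _ => ?_
          unfold aa; ring
      _ = _ := by rw [swap, sub_self, add_zero]
  -- step 2: partial sums as integrals
  have hAk : ∀ k : ℕ, (∑ p ∈ range (k+1), aa m x y p)
      = -((m:ℝ)+1) * ∫ t in y..x, bern m k t := by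
    intro k; unfold aa; rw [sum_sub_distrib]; exact partial_eq_integral m k y x
  -- sign of the integrals
  have hsign : ∀ k l : ℕ,
      0 ≤ (∫ t in y..x, bern m k t) * ∫ t in y..x, bern m l t := by
    have hnn : ∀ (k : ℕ), ∀ u ∈ Set.Icc (min x y) (max x y), 0 ≤ bern m k u := by
      intro k u hu
      exact bern_nonneg (le_trans (le_min hx.1 hy.1) hu.1) (le_trans hu.2 (max_le hx.2 hy.2))
    rcases le_total y x with h | h
    · have h1 : ∀ k : ℕ, 0 ≤ ∫ t in y..x, bern m k t := fun k =>
        intervalIntegral.integral_nonneg h (fun u hu => hnn k u ⟨le_trans (min_le_right x y) hu.1,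
          le_trans hu.2 (le_max_left x y)⟩)
      exact fun k l => mul_nonneg (h1 k) (h1 l)
    · have h1 : ∀ k : ℕ, ∫ t in y..x, bern m k t ≤ 0 := by
        intro k
        rw [intervalIntegral.integral_symm]
        simp only [neg_nonpos]
        exact intervalIntegral.integral_nonneg h (fun u hu => hnn k u
          ⟨le_trans (min_le_left x y) hu.1, le_trans hu.2 (le_max_right x y)⟩)
      exact fun k l => by nlinarith [mul_nonneg (neg_nonneg.mpr (h1 k)) (neg_nonneg.mpr (h1 l))]
  -- second differences are nonnegative
  have hd : ∀ k ∈ range (m+1), ∀ l ∈ range (m+1),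
      0 ≤ cc f m (k+l+2) - 2 * cc f m (k+l+1) + cc f m (k+l) := by
    intro k hk l hl
    simp only [mem_range] at hk hl
    have hkm : (k:ℝ) ≤ m := by exact_mod_cast Nat.lt_succ_iff.mp hk
    have hlm : (l:ℝ) ≤ m := by exact_mod_cast Nat.lt_succ_iff.mp hl
    have hden : (0:ℝ) < 2*((m:ℝ)+1) := by positivity
    have hp : ((k+l : ℕ):ℝ)/(2*((m:ℝ)+1)) ∈ Set.Icc (0:ℝ) 1 := by
      constructor
      · positivity
      · rw [div_le_one hden]; push_cast; linarith
    have hq : ((k+l+2 : ℕ):ℝ)/(2*((m:ℝ)+1)) ∈ Set.Icc (0:ℝ) 1 := by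
      constructor
      · positivity
      · rw [div_le_one hden]; push_cast; linarith
    have h2 := second_diff_nonneg f hconv hp hq
    have hmid : ((((k+l:ℕ):ℝ)/(2*((m:ℝ)+1))) + (((k+l+2:ℕ):ℝ)/(2*((m:ℝ)+1))))/2
        = ((k+l+1:ℕ):ℝ)/(2*((m:ℝ)+1)) := by push_cast; ring
    rw [hmid] at h2
    unfold cc
    linarith
  -- assemble
  calc (0:ℝ)
      ≤ ∑ k ∈ range (m+1), ∑ l ∈ range (m+1),
          (∑ p ∈ range (k+1), aa m x y p) * (∑ p ∈ range (l+1), aa m x y p)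
            * (cc f m (k+l+2) - 2*cc f m (k+l+1) + cc f m (k+l)) := by
        refine sum_nonneg fun k hk => sum_nonneg fun l hl => ?_
        rw [hAk k, hAk l]
        have e : (-((m:ℝ)+1) * ∫ t in y..x, bern m k t)
              * (-((m:ℝ)+1) * ∫ t in y..x, bern m l t)
            = ((m:ℝ)+1)^2 * ((∫ t in y..x, bern m k t) * ∫ t in y..x, bern m l t) := by
          ring
        rw [e]
        exact mul_nonneg (mul_nonneg (by positivity) (hsign k l)) (hd k hk l hl)
    _ = ∑ i ∈ range (m+1+1), ∑ j ∈ range (m+1+1),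
          aa m x y i * aa m x y j * cc f m (i+j) :=
        (double_parts (aa m x y) (cc f m) (m+1) ha).symm
    _ = ∑ i ∈ range (m+1+1), ∑ j ∈ range (m+1+1),
        (bern (m+1) i x * bern (m+1) j x + bern (m+1) i y * bern (m+1) j y
          - 2 * bern (m+1) i x * bern (m+1) j y) * cc f m (i+j) := key.symm
    _ = ∑ i ∈ range (m+1+1), ∑ j ∈ range (m+1+1),
        (bern (m+1) i x * bern (m+1) j x + bern (m+1) i y * bern (m+1) j y
          - 2 * bern (m+1) i x * bern (m+1) j y) * f ((i + j : ℝ) / (2 * (m+1 : ℕ))) := by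
        refine sum_congr rfl fun i _ => sum_congr rfl fun j _ => ?_
        rw [hF i j]
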